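/- Let A and A' be Schur rings over finite groups G and G', φ: A → A' an algebraic isomorphism, ξ ∈ ℤG, ξ' ∈ ℤG'. Let B be the smallest Schur ring over G containing A and ξ, and B' the smallest Schur ring over G' containing A' and ξ'. Then there is at most one algebraic isomorphism ψ: B → B' extending φ with ξ^ψ = ξ'. -/

import Mathlib

open scoped BigOperators

/-- The indicator element `X̲ = Σ_{x∈X} x` of a finset in the integral group ring `ℤG`. -/
noncomputable def grpInd {G : Type*} [Group G] (X : Finset G) : MonoidAlgebra ℤ G :=
  ∑ x ∈ X, MonoidAlgebra.single x (1 : ℤ)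

/-- A Schur ring over a finite group `G`: a partition of `G` containing `{1}`,
closed under inverses, whose indicator elements span a subring of `ℤG`. -/
structure SchurRing (G : Type*) [Group G] [Fintype G] [DecidableEq G] where
  parts : Finset (Finset G)
  nonempty_mem : ∀ X ∈ parts, X.Nonempty
  cover : ∀ g : G, ∃ X ∈ parts, g ∈ X
  pairwise_disjoint : ∀ X ∈ parts, ∀ Y ∈ parts, X ≠ Y → Disjoint X Y
  one_mem : ({1} : Finset G) ∈ parts
  inv_mem : ∀ X ∈ parts, X.image (·⁻¹) ∈ parts
  mul_mem : ∀ X ∈ parts, ∀ Y ∈ parts, ∃ c : Finset G → ℤ,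
    grpInd X * grpInd Y = ∑ Z ∈ parts, c Z • grpInd Z

namespace SchurRing

variable {G : Type*} [Group G] [Fintype G] [DecidableEq G]

/-- The underlying `ℤ`-module of the Schur ring: the span of the indicators of basic sets. -/
noncomputable def carrier (A : SchurRing G) : Submodule ℤ (MonoidAlgebra ℤ G) :=
  Submodule.span ℤ {v | ∃ X ∈ A.parts, v = grpInd X}

/-- `X ⊆ G` is an `A`-set if its indicator lies in `A`. -/
def IsASet (A : SchurRing G) (X : Finset G) : Prop := grpInd X ∈ A.carrier

/-- `A` is a subring of `B` (as S-rings over the same group). -/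
def le (A B : SchurRing G) : Prop := ∀ X ∈ A.parts, grpInd X ∈ B.carrier

end SchurRing

/-- An algebraic isomorphism of Schur rings: a bijection of basic sets preserving all
structure constants (the structure constant `c^Z_{X,Y}` is the coefficient of the
product `X̲·Y̲` at any `z ∈ Z`). -/
def IsAlgIso {G G' : Type*} [Group G] [Fintype G] [DecidableEq G]
    [Group G'] [Fintype G'] [DecidableEq G']
    (A : SchurRing G) (A' : SchurRing G') (φ : Finset G → Finset G') : Prop :=
  Set.BijOn φ ↑A.parts ↑A'.parts ∧
  ∀ X ∈ A.parts, ∀ Y ∈ A.parts, ∀ Z ∈ A.parts, ∀ z ∈ Z, ∀ z' ∈ φ Z,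
    (grpInd X * grpInd Y).coeff z = (grpInd (φ X) * grpInd (φ Y)).coeff z'

/-- A combinatorial isomorphism of Schur rings: a bijection `G → G'` mapping basic sets to
basic sets and inducing a Cayley graph isomorphism on each basic set. -/
def IsCombIso {G G' : Type*} [Group G] [Fintype G] [DecidableEq G]
    [Group G'] [Fintype G'] [DecidableEq G']
    (A : SchurRing G) (A' : SchurRing G') (f : G → G') : Prop :=
  Function.Bijective f ∧
  ∀ X ∈ A.parts, X.image f ∈ A'.parts ∧
    ∀ g h : G, h * g⁻¹ ∈ X ↔ f h * (f g)⁻¹ ∈ X.image f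

/-- An automorphism of a Schur ring: a permutation of `G` preserving the edge set of
`Cay(G,X)` for every basic set `X`. -/
def IsSchurAut {G : Type*} [Group G] [Fintype G] [DecidableEq G]
    (A : SchurRing G) (f : G → G) : Prop :=
  Function.Bijective f ∧ ∀ X ∈ A.parts, ∀ g h : G, h * g⁻¹ ∈ X ↔ f h * (f g)⁻¹ ∈ X

/-- Separability with respect to the class of (finite) abelian groups. -/
def SchurRing.IsSeparableAbelian {G : Type} [Group G] [Fintype G] [DecidableEq G]
    (A : SchurRing G) : Prop :=
  ∀ (G' : Type) [CommGroup G'] [Fintype G'] [DecidableEq G'],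
    ∀ (A' : SchurRing G') (φ : Finset G → Finset G'),
    IsAlgIso A A' φ →
    ∃ f : G → G', IsCombIso A A' f ∧ ∀ X ∈ A.parts, φ X = X.image f
set_option linter.unusedSectionVars false
set_option maxHeartbeats 1000000

section AuxLemmas

variable {G : Type*} [Group G] [Fintype G] [DecidableEq G]

lemma ma_sum_apply {ι : Type*} (S : Finset ι) (f : ι → MonoidAlgebra ℤ G) (a : G) :
    (∑ i ∈ S, f i).coeff a = ∑ i ∈ S, (f i).coeff a := by
  rw [MonoidAlgebra.coeff_sum, Finsupp.finset_sum_apply]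

lemma grpInd_apply (S : Finset G) (x : G) : (grpInd S).coeff x = if x ∈ S then 1 else 0 := by
  classical
  rw [grpInd, MonoidAlgebra.coeff_sum, Finsupp.finset_sum_apply]
  simp [MonoidAlgebra.coeff_single, Finsupp.single_apply]

lemma grpInd_inj {S T : Finset G} (h : grpInd S = grpInd T) : S = T := by
  ext x
  have := congrArg (fun v : MonoidAlgebra ℤ G => v.coeff x) h
  simp only [grpInd_apply] at this
  by_cases hS : x ∈ S <;> by_cases hT : x ∈ T <;> simp_all

lemma grpInd_mul_apply (S T : Finset G) (x : G) :
    (grpInd S * grpInd T).coeff x = ∑ a ∈ S, ∑ b ∈ T, if a * b = x then (1:ℤ) else 0 := by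
  classical
  rw [grpInd, grpInd, Finset.sum_mul_sum]
  simp_rw [MonoidAlgebra.single_mul_single, one_mul]
  rw [MonoidAlgebra.coeff_sum, Finsupp.finset_sum_apply]
  refine Finset.sum_congr rfl fun a _ => ?_
  rw [MonoidAlgebra.coeff_sum, Finsupp.finset_sum_apply]
  refine Finset.sum_congr rfl fun b _ => ?_
  simp [MonoidAlgebra.coeff_single, Finsupp.single_apply]

lemma SchurRing.part_eq (A : SchurRing G) {X Y : Finset G} (hX : X ∈ A.parts)
    (hY : Y ∈ A.parts) {g : G} (hgX : g ∈ X) (hgY : g ∈ Y) : X = Y := by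
  by_contra h
  exact Finset.disjoint_left.mp (A.pairwise_disjoint X hX Y hY h) hgX hgY

lemma SchurRing.carrier_const (A : SchurRing G) {v : MonoidAlgebra ℤ G} (hv : v ∈ A.carrier) :
    ∀ X ∈ A.parts, ∀ x ∈ X, ∀ y ∈ X, v.coeff x = v.coeff y := by
  refine Submodule.span_induction ?_ ?_ ?_ ?_ hv
  · rintro w ⟨Y, hY, rfl⟩ X hX x hx y hy
    rw [grpInd_apply, grpInd_apply]
    by_cases hXY : X = Y
    · subst hXY; rw [if_pos hx, if_pos hy]
    · rw [if_neg, if_neg]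
      · exact fun hyY => hXY (A.part_eq hX hY hy hyY)
      · exact fun hxY => hXY (A.part_eq hX hY hx hxY)
  · intro X hX x hx y hy; rfl
  · intro v w _ _ hv hw X hX x hx y hy
    have h1 := hv X hX x hx y hy
    have h2 := hw X hX x hx y hy
    show (v + w).coeff x = (v + w).coeff y
    rw [MonoidAlgebra.coeff_add, Finsupp.add_apply, Finsupp.add_apply, h1, h2]
  · intro a v _ hv X hX x hx y hy
    have h1 := hv X hX x hx y hy
    show (a • v).coeff x = (a • v).coeff y
    rw [MonoidAlgebra.coeff_smul_apply, MonoidAlgebra.coeff_smul_apply, h1]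

lemma repr_of_const (parts : Finset (Finset G))
    (hcov : ∀ g : G, ∃ P ∈ parts, g ∈ P)
    (hdis : ∀ X ∈ parts, ∀ Y ∈ parts, X ≠ Y → Disjoint X Y)
    (v : MonoidAlgebra ℤ G)
    (hconst : ∀ P ∈ parts, ∀ x ∈ P, ∀ y ∈ P, v.coeff x = v.coeff y) :
    ∃ c : Finset G → ℤ, v = ∑ P ∈ parts, c P • grpInd P := by
  classical
  refine ⟨fun P => if h : ∃ g : G, g ∈ P then v.coeff h.choose else 0, ?_⟩
  ext x
  obtain ⟨P₀, hP₀, hxP₀⟩ := hcov x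
  rw [MonoidAlgebra.coeff_sum, Finsupp.finset_sum_apply]
  rw [Finset.sum_eq_single P₀ (fun P hP hne => ?_) (fun h => absurd hP₀ h)]
  · beta_reduce
    have hex : ∃ g : G, g ∈ P₀ := ⟨x, hxP₀⟩
    rw [dif_pos hex, MonoidAlgebra.coeff_smul_apply, grpInd_apply, if_pos hxP₀, smul_eq_mul, mul_one]
    exact hconst P₀ hP₀ x hxP₀ hex.choose hex.choose_spec
  · beta_reduce
    have hxP : x ∉ P := fun hxP => hne (by
      by_contra h
      exact Finset.disjoint_left.mp (hdis P hP P₀ hP₀ h) hxP hxP₀)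
    rw [MonoidAlgebra.coeff_smul_apply, grpInd_apply, if_neg hxP, smul_eq_mul, mul_zero]

lemma sum_grpInd_mem_carrier (A : SchurRing G) (c : Finset G → ℤ) :
    ∑ P ∈ A.parts, c P • grpInd P ∈ A.carrier :=
  Submodule.sum_mem _ fun P hP =>
    Submodule.smul_mem _ _ (Submodule.subset_span ⟨P, hP, rfl⟩)

lemma perm_zpow_val {β : Type*} (p : Equiv.Perm β) (u : β → ℤ)
    (h : ∀ x, u (p x) = u x) : ∀ n : ℤ, ∀ x, u ((p ^ n) x) = u x := by
  have hnat : ∀ n : ℕ, ∀ x, u ((p ^ n) x) = u x := by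
    intro n
    induction n with
    | zero => intro x; simp
    | succ k ih =>
      intro x
      rw [pow_succ, Equiv.Perm.mul_apply, ih, h]
  intro n x
  cases n with
  | ofNat m => simpa using hnat m x
  | negSucc m =>
    rw [zpow_negSucc]
    have := hnat (m + 1) (((p ^ (m + 1))⁻¹) x)
    rw [Equiv.Perm.coe_inv, Equiv.apply_symm_apply] at this
    exact this.symm

lemma perm_zpow_comm {β : Type*} (p : Equiv.Perm β) (f : β → β)
    (h : ∀ x, p (f x) = f (p x)) : ∀ n : ℤ, ∀ x, (p ^ n) (f x) = f ((p ^ n) x) := by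
  have hnat : ∀ n : ℕ, ∀ x, (p ^ n) (f x) = f ((p ^ n) x) := by
    intro n
    induction n with
    | zero => intro x; simp
    | succ k ih =>
      intro x
      rw [pow_succ, Equiv.Perm.mul_apply, Equiv.Perm.mul_apply, h, ih]
  intro n x
  cases n with
  | ofNat m => simpa using hnat m x
  | negSucc m =>
    rw [zpow_negSucc]
    apply (p ^ (m + 1)).injective
    rw [Equiv.Perm.coe_inv, Equiv.apply_symm_apply, hnat (m + 1), Equiv.apply_symm_apply]

variable {G' : Type*} [Group G'] [Fintype G'] [DecidableEq G']

lemma IsAlgIso.map_one {B : SchurRing G} {B' : SchurRing G'} {ψ : Finset G → Finset G'}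
    (h : IsAlgIso B B' ψ) : ψ ({1} : Finset G) = ({1} : Finset G') := by
  classical
  obtain ⟨hbij, hsc⟩ := h
  have hE : ({1} : Finset G) ∈ B.parts := B.one_mem
  have hF : ψ {1} ∈ B'.parts := hbij.mapsTo hE
  have hone : grpInd ({1} : Finset G) = (1 : MonoidAlgebra ℤ G) := by
    simp [grpInd, MonoidAlgebra.one_def]
  have hcov' : ∀ x : G', ∃ V ∈ B.parts, x ∈ ψ V := by
    intro x
    obtain ⟨W', hW', hxW'⟩ := B'.cover x
    obtain ⟨V, hV, rfl⟩ := hbij.surjOn hW'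
    exact ⟨V, hV, hxW'⟩
  have key : grpInd (ψ {1}) * grpInd (ψ {1}) = grpInd (ψ {1}) := by
    ext x
    obtain ⟨V, hV, hxV⟩ := hcov' x
    obtain ⟨z, hz⟩ := B.nonempty_mem V hV
    have hstep := hsc {1} hE {1} hE V hV z hz x hxV
    rw [hone, one_mul] at hstep
    rw [← hstep, grpInd_apply]
    by_cases hVE : V = ({1} : Finset G)
    · subst hVE
      have hz1 : z = 1 := Finset.mem_singleton.mp hz
      rw [if_pos hxV, hz1]
      simp [MonoidAlgebra.one_def, Finsupp.single_apply]
    · have hz1 : z ≠ 1 := fun h => hVE (B.part_eq hV B.one_mem hz (Finset.mem_singleton.mpr h))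
      rw [if_neg (fun hx1 => hVE (hbij.injOn hV hE (B'.part_eq (hbij.mapsTo hV) hF hxV hx1)))]
      simp [MonoidAlgebra.one_def, Finsupp.single_apply, Ne.symm hz1]
  have haug : ∀ S : Finset G', (MonoidAlgebra.lift ℤ ℤ G' 1) (grpInd S) = (S.card : ℤ) := by
    intro S
    rw [grpInd, map_sum]
    simp
  have hcard : ((ψ {1}).card : ℤ) * ((ψ {1}).card : ℤ) = ((ψ {1}).card : ℤ) := by
    have := congrArg (MonoidAlgebra.lift ℤ ℤ G' 1) key
    rwa [map_mul, haug] at this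
  have hpos : 0 < (ψ {1}).card := Finset.card_pos.mpr (B'.nonempty_mem _ hF)
  have hcard1 : (ψ {1}).card = 1 := by
    have hne : ((ψ {1}).card : ℤ) ≠ 0 := by exact_mod_cast hpos.ne'
    have := mul_left_cancel₀ hne (hcard.trans (mul_one _).symm)
    exact_mod_cast this
  obtain ⟨f, hf⟩ := Finset.card_eq_one.mp hcard1
  rw [hf] at key
  have hsingle : grpInd ({f} : Finset G') = MonoidAlgebra.single f 1 := by
    simp [grpInd]
  rw [hsingle, MonoidAlgebra.single_mul_single, one_mul] at key
  have hff : f * f = f := by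
    rcases MonoidAlgebra.single_inj.mp key with ⟨h1, _⟩ | ⟨h1, _⟩
    · exact h1
    · exact absurd h1 one_ne_zero
  have hf1 : f = 1 := mul_left_cancel (a := f) (by rw [mul_one]; exact hff)
  rw [hf, hf1]

lemma IsAlgIso.map_inv {B : SchurRing G} {B' : SchurRing G'} {ψ : Finset G → Finset G'}
    (h : IsAlgIso B B' ψ) {Z : Finset G} (hZ : Z ∈ B.parts) :
    ψ (Z.image (·⁻¹)) = (ψ Z).image (·⁻¹) := by
  classical
  have hone := h.map_one
  obtain ⟨hbij, hsc⟩ := h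
  have hZs : Z.image (·⁻¹) ∈ B.parts := B.inv_mem Z hZ
  have h1E : (1 : G) ∈ ({1} : Finset G) := Finset.mem_singleton_self 1
  have h1F : (1 : G') ∈ ψ ({1} : Finset G) := by
    rw [hone]; exact Finset.mem_singleton_self 1
  have hkey := hsc Z hZ (Z.image (·⁻¹)) hZs {1} B.one_mem 1 h1E 1 h1F
  rw [grpInd_mul_apply, grpInd_mul_apply] at hkey
  obtain ⟨a, ha⟩ := B.nonempty_mem Z hZ
  have hlhs : (1:ℤ) ≤ ∑ x ∈ Z, ∑ b ∈ Z.image (·⁻¹), if x * b = 1 then (1:ℤ) else 0 := by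
    have hterm : (1:ℤ) ≤ ∑ b ∈ Z.image (·⁻¹), if a * b = 1 then (1:ℤ) else 0 := by
      have hmem : a⁻¹ ∈ Z.image (·⁻¹) := Finset.mem_image_of_mem _ ha
      have := Finset.single_le_sum (f := fun b => if a * b = 1 then (1:ℤ) else 0)
        (fun i _ => by positivity) hmem
      simpa using this
    calc (1:ℤ) ≤ ∑ b ∈ Z.image (·⁻¹), if a * b = 1 then (1:ℤ) else 0 := hterm
      _ ≤ _ := Finset.single_le_sum
          (f := fun x => ∑ b ∈ Z.image (·⁻¹), if x * b = 1 then (1:ℤ) else 0)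
          (fun i _ => Finset.sum_nonneg fun j _ => by positivity) ha
  have hex : ∃ a' ∈ ψ Z, ∃ b' ∈ ψ (Z.image (·⁻¹)), a' * b' = 1 := by
    by_contra hno
    push_neg at hno
    have hzero : ∑ a' ∈ ψ Z, ∑ b' ∈ ψ (Z.image (·⁻¹)), (if a' * b' = 1 then (1:ℤ) else 0) = 0 :=
      Finset.sum_eq_zero fun a' ha' => Finset.sum_eq_zero fun b' hb' =>
        if_neg (hno a' ha' b' hb')
    rw [hkey, hzero] at hlhs
    omega
  obtain ⟨a', ha', b', hb', hab⟩ := hex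
  have hb'' : b' ∈ (ψ Z).image (·⁻¹) := by
    have hb : b' = a'⁻¹ := eq_inv_of_mul_eq_one_right hab
    exact hb ▸ Finset.mem_image_of_mem _ ha'
  exact B'.part_eq (hbij.mapsTo hZs) (B'.inv_mem _ (hbij.mapsTo hZ)) hb' hb''

end AuxLemmas

/-- given an algebraic isomorphism `φ : A → A'` and elements `ξ ∈ ℤG`,
`ξ' ∈ ℤG'`, there is at most one algebraic isomorphism between the S-rings generated by
`A, ξ` and by `A', ξ'` extending `φ` and sending `ξ` to `ξ'`.
Here `ψ` extends `φ` means the `ℤ`-linear extension of `ψ` agrees with `φ` on the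
indicators of basic sets of `A` (each a union of basic sets of `B`), and `ξ^ψ = ξ'`
is expressed via the coefficients of `ξ, ξ'` (constant on basic sets of `B`, `B'`). -/
theorem stmt6 {G G' : Type*} [Group G] [Fintype G] [DecidableEq G]
    [Group G'] [Fintype G'] [DecidableEq G']
    (A B : SchurRing G) (A' B' : SchurRing G')
    (φ : Finset G → Finset G') (hφ : IsAlgIso A A' φ)
    (ξ : MonoidAlgebra ℤ G) (ξ' : MonoidAlgebra ℤ G')
    -- `B` is the smallest S-ring over `G` containing `A` and `ξ`:
    (hB : A.le B ∧ ξ ∈ B.carrier ∧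
      ∀ C : SchurRing G, A.le C → ξ ∈ C.carrier → B.le C)
    -- `B'` is the smallest S-ring over `G'` containing `A'` and `ξ'`:
    (hB' : A'.le B' ∧ ξ' ∈ B'.carrier ∧
      ∀ C : SchurRing G', A'.le C → ξ' ∈ C.carrier → B'.le C)
    (ψ₁ ψ₂ : Finset G → Finset G')
    (h₁ : IsAlgIso B B' ψ₁ ∧
      (∀ X ∈ A.parts, grpInd (φ X) = ∑ Z ∈ B.parts.filter (· ⊆ X), grpInd (ψ₁ Z)) ∧
      (∀ Z ∈ B.parts, ∀ z ∈ Z, ∀ z' ∈ ψ₁ Z, ξ.coeff z = ξ'.coeff z'))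
    (h₂ : IsAlgIso B B' ψ₂ ∧
      (∀ X ∈ A.parts, grpInd (φ X) = ∑ Z ∈ B.parts.filter (· ⊆ X), grpInd (ψ₂ Z)) ∧
      (∀ Z ∈ B.parts, ∀ z ∈ Z, ∀ z' ∈ ψ₂ Z, ξ.coeff z = ξ'.coeff z')) :
    ∀ Z ∈ B.parts, ψ₁ Z = ψ₂ Z := by
  classical
  obtain ⟨hAB, hξB, hBmin⟩ := hB
  obtain ⟨hψ₁, hext₁, hξ₁⟩ := h₁
  obtain ⟨hψ₂, hext₂, hξ₂⟩ := h₂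
  have hbij₁ := hψ₁.1
  have hsc₁ := hψ₁.2
  have hbij₂ := hψ₂.1
  have hsc₂ := hψ₂.2
  have hm₁ : ∀ V ∈ B.parts, ψ₁ V ∈ B'.parts := fun V hV =>
    Finset.mem_coe.mp (hbij₁.mapsTo (Finset.mem_coe.mpr hV))
  have hm₂ : ∀ V ∈ B.parts, ψ₂ V ∈ B'.parts := fun V hV =>
    Finset.mem_coe.mp (hbij₂.mapsTo (Finset.mem_coe.mpr hV))
  have hinj₁ : ∀ V ∈ B.parts, ∀ W ∈ B.parts, ψ₁ V = ψ₁ W → V = W := fun V hV W hW h =>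
    hbij₁.injOn (Finset.mem_coe.mpr hV) (Finset.mem_coe.mpr hW) h
  have hinj₂ : ∀ V ∈ B.parts, ∀ W ∈ B.parts, ψ₂ V = ψ₂ W → V = W := fun V hV W hW h =>
    hbij₂.injOn (Finset.mem_coe.mpr hV) (Finset.mem_coe.mpr hW) h
  -- construct the permutation τ = ψ₂⁻¹ ∘ ψ₁ of the basic sets of B
  have hτex : ∀ Z, Z ∈ B.parts → ∃ W, W ∈ B.parts ∧ ψ₂ W = ψ₁ Z := by
    intro Z hZ
    obtain ⟨W, hW, hWe⟩ := hbij₂.surjOn (hbij₁.mapsTo (Finset.mem_coe.mpr hZ))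
    exact ⟨W, Finset.mem_coe.mp hW, hWe⟩
  let t : Finset G → Finset G := fun Z =>
    if h : Z ∈ B.parts then (hτex Z h).choose else Z
  have ht_mem : ∀ Z ∈ B.parts, t Z ∈ B.parts := by
    intro Z hZ
    show (if h : Z ∈ B.parts then (hτex Z h).choose else Z) ∈ B.parts
    rw [dif_pos hZ]
    exact (hτex Z hZ).choose_spec.1
  have ht_eq : ∀ Z ∈ B.parts, ψ₂ (t Z) = ψ₁ Z := by
    intro Z hZ
    show ψ₂ (if h : Z ∈ B.parts then (hτex Z h).choose else Z) = ψ₁ Z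
    rw [dif_pos hZ]
    exact (hτex Z hZ).choose_spec.2
  have ht_id : ∀ Z, Z ∉ B.parts → t Z = Z := by
    intro Z hZ
    show (if h : Z ∈ B.parts then (hτex Z h).choose else Z) = Z
    rw [dif_neg hZ]
  have ht_inj : Function.Injective t := by
    intro Z W hZW
    by_cases hZ : Z ∈ B.parts <;> by_cases hW : W ∈ B.parts
    · exact hinj₁ Z hZ W hW (by rw [← ht_eq Z hZ, ← ht_eq W hW, hZW])
    · rw [ht_id W hW] at hZW
      exact absurd (by rw [← hZW]; exact ht_mem Z hZ) hW
    · rw [ht_id Z hZ] at hZW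
      exact absurd (by rw [hZW]; exact ht_mem W hW) hZ
    · rwa [ht_id Z hZ, ht_id W hW] at hZW
  let τ : Equiv.Perm (Finset G) := Equiv.ofBijective t (Finite.injective_iff_bijective.mp ht_inj)
  have hτt : ∀ Z, τ Z = t Z := fun Z => rfl
  have hτ_mem : ∀ Z ∈ B.parts, τ Z ∈ B.parts := fun Z hZ => by rw [hτt]; exact ht_mem Z hZ
  have hτ_eq : ∀ Z ∈ B.parts, ψ₂ (τ Z) = ψ₁ Z := fun Z hZ => by rw [hτt]; exact ht_eq Z hZ
  have hτ_id : ∀ Z, Z ∉ B.parts → τ Z = Z := fun Z hZ => by rw [hτt]; exact ht_id Z hZ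
  have hτ_symm_mem : ∀ Z ∈ B.parts, τ.symm Z ∈ B.parts := by
    intro Z hZ
    by_contra h
    have h2 : τ (τ.symm Z) = Z := τ.apply_symm_apply Z
    rw [hτ_id _ h] at h2
    rw [h2] at h
    exact h hZ
  have hSC_refl : ∀ Z : Finset G, τ.SameCycle Z Z := fun Z => ⟨0, by simp⟩
  have hSC_next : ∀ Z : Finset G, τ.SameCycle Z (τ Z) := fun Z => ⟨1, by simp⟩
  have hSC_prev : ∀ Z : Finset G, τ.SameCycle Z (τ.symm Z) := fun Z =>
    ⟨-1, by rw [zpow_neg_one]; rfl⟩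
  -- the orbit union
  let O : Finset G → Finset G := fun Z => (B.parts.filter (fun W => τ.SameCycle Z W)).biUnion id
  have hO_mem : ∀ (g : G) (Z : Finset G),
      g ∈ O Z ↔ ∃ W, W ∈ B.parts ∧ τ.SameCycle Z W ∧ g ∈ W := by
    intro g Z
    show g ∈ (B.parts.filter fun W => τ.SameCycle Z W).biUnion id ↔ _
    simp only [Finset.mem_biUnion, Finset.mem_filter, id]
    tauto
  let Cparts : Finset (Finset G) := B.parts.image O
  have hCparts_mem : ∀ P, P ∈ Cparts ↔ ∃ Z, Z ∈ B.parts ∧ O Z = P := by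
    intro P
    show P ∈ B.parts.image O ↔ _
    simp [Finset.mem_image]
  have hsub_O : ∀ Z ∈ B.parts, Z ⊆ O Z := by
    intro Z hZ g hg
    exact (hO_mem g Z).mpr ⟨Z, hZ, hSC_refl Z, hg⟩
  have hO_congr : ∀ Z W, τ.SameCycle Z W → O Z = O W := by
    intro Z W hSC
    show (B.parts.filter _).biUnion id = (B.parts.filter _).biUnion id
    congr 1
    ext V
    simp only [Finset.mem_filter]
    exact and_congr_right fun _ => ⟨fun h => hSC.symm.trans h, fun h => hSC.trans h⟩
  have hO_unique : ∀ Z W : Finset G, W ∈ B.parts → ∀ g, g ∈ O Z → g ∈ W → τ.SameCycle Z W := by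
    intro Z W hW g hgO hgW
    obtain ⟨W', hW', hSC, hgW'⟩ := (hO_mem g Z).mp hgO
    rwa [B.part_eq hW' hW hgW' hgW] at hSC
  -- partition properties
  have hCne : ∀ P ∈ Cparts, P.Nonempty := by
    intro P hP
    obtain ⟨Z, hZ, rfl⟩ := (hCparts_mem P).mp hP
    exact (B.nonempty_mem Z hZ).mono (hsub_O Z hZ)
  have hCcov : ∀ g : G, ∃ P ∈ Cparts, g ∈ P := by
    intro g
    obtain ⟨V, hV, hgV⟩ := B.cover g
    exact ⟨O V, (hCparts_mem _).mpr ⟨V, hV, rfl⟩, hsub_O V hV hgV⟩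
  have hCdis : ∀ P ∈ Cparts, ∀ Q ∈ Cparts, P ≠ Q → Disjoint P Q := by
    intro P hP Q hQ hne
    obtain ⟨Z, hZ, rfl⟩ := (hCparts_mem P).mp hP
    obtain ⟨W, hW, rfl⟩ := (hCparts_mem Q).mp hQ
    rw [Finset.disjoint_left]
    intro g hgP hgQ
    obtain ⟨V, hV, hgV⟩ := B.cover g
    exact hne (hO_congr Z W
      ((hO_unique Z V hV g hgP hgV).trans (hO_unique W V hV g hgQ hgV).symm))
  -- τ fixes {1}
  have hfilone : B.parts.filter (· ⊆ ({1} : Finset G)) = {({1} : Finset G)} := by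
    ext W
    simp only [Finset.mem_filter, Finset.mem_singleton]
    constructor
    · rintro ⟨hW, hsub⟩
      rcases Finset.subset_singleton_iff.mp hsub with h | h
      · exact absurd h (B.nonempty_mem W hW).ne_empty
      · exact h
    · rintro rfl
      exact ⟨B.one_mem, subset_rfl⟩
  have hψone : ψ₁ ({1} : Finset G) = ψ₂ ({1} : Finset G) := by
    have h1 := hext₁ {1} A.one_mem
    have h2 := hext₂ {1} A.one_mem
    rw [hfilone, Finset.sum_singleton] at h1 h2
    exact grpInd_inj (h1.symm.trans h2)
  have hfix1 : τ ({1} : Finset G) = ({1} : Finset G) := by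
    refine hinj₂ _ (hτ_mem _ B.one_mem) _ B.one_mem ?_
    rw [hτ_eq _ B.one_mem, hψone]
  have hCone : ({1} : Finset G) ∈ Cparts := by
    have hO1 : O ({1} : Finset G) = {1} := by
      ext g
      rw [hO_mem]
      constructor
      · rintro ⟨W, hW, ⟨n, hn⟩, hgW⟩
        rw [Equiv.Perm.zpow_apply_eq_self_of_apply_eq_self hfix1 n] at hn
        rwa [← hn] at hgW
      · intro hg
        exact ⟨{1}, B.one_mem, hSC_refl _, hg⟩
    exact (hCparts_mem _).mpr ⟨{1}, B.one_mem, hO1⟩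
  -- closure under inverses
  have hstarstar : ∀ S : Finset G, (S.image (·⁻¹)).image (·⁻¹) = S := by
    intro S
    rw [Finset.image_image]
    simp [Function.comp_def]
  have hstar_parts : ∀ Z : Finset G, Z ∈ B.parts ↔ Z.image (·⁻¹) ∈ B.parts := by
    intro Z
    constructor
    · exact B.inv_mem Z
    · intro h
      have := B.inv_mem _ h
      rwa [hstarstar] at this
  have hstar_comm : ∀ Z : Finset G, τ (Z.image (·⁻¹)) = (τ Z).image (·⁻¹) := by
    intro Z
    by_cases hZ : Z ∈ B.parts
    · refine hinj₂ _ (hτ_mem _ ((hstar_parts Z).mp hZ)) _ ((hstar_parts _).mp (hτ_mem Z hZ)) ?_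
      rw [hτ_eq _ ((hstar_parts Z).mp hZ), hψ₁.map_inv hZ, ← hτ_eq Z hZ,
        ← hψ₂.map_inv (hτ_mem Z hZ)]
    · have hZs : Z.image (·⁻¹) ∉ B.parts := fun h => hZ ((hstar_parts Z).mpr h)
      rw [hτ_id _ hZs, hτ_id _ hZ]
  have hstar_SC : ∀ Z W : Finset G, τ.SameCycle Z W →
      τ.SameCycle (Z.image (·⁻¹)) (W.image (·⁻¹)) := by
    rintro Z W ⟨n, hn⟩
    refine ⟨n, ?_⟩
    have := perm_zpow_comm τ (fun S => S.image (·⁻¹)) hstar_comm n Z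
    rw [this, hn]
  have hCinv : ∀ P ∈ Cparts, P.image (·⁻¹) ∈ Cparts := by
    intro P hP
    obtain ⟨Z, hZ, rfl⟩ := (hCparts_mem P).mp hP
    have himg : (O Z).image (·⁻¹) = O (Z.image (·⁻¹)) := by
      ext g
      constructor
      · intro hg
        obtain ⟨g', hg', rfl⟩ := Finset.mem_image.mp hg
        obtain ⟨W, hW, hSC, hgW⟩ := (hO_mem g' Z).mp hg'
        exact (hO_mem _ _).mpr ⟨W.image (·⁻¹), B.inv_mem W hW, hstar_SC Z W hSC,
          Finset.mem_image_of_mem _ hgW⟩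
      · intro hg
        obtain ⟨W, hW, hSC, hgW⟩ := (hO_mem g _).mp hg
        have hSC' : τ.SameCycle Z (W.image (·⁻¹)) := by
          have := hstar_SC _ _ hSC
          rwa [hstarstar] at this
        refine Finset.mem_image.mpr ⟨g⁻¹, (hO_mem _ _).mpr
          ⟨W.image (·⁻¹), B.inv_mem W hW, hSC', Finset.mem_image_of_mem _ hgW⟩, inv_inv g⟩
    rw [himg]
    exact (hCparts_mem _).mpr ⟨Z.image (·⁻¹), B.inv_mem Z hZ, rfl⟩
  -- constancy machinery
  have hval : ∀ u : Finset G → ℤ, (∀ V, u (τ V) = u V) →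
      ∀ Z W, τ.SameCycle Z W → u Z = u W := by
    rintro u hu Z W ⟨n, hn⟩
    rw [← hn]
    exact (perm_zpow_val τ u hu n Z).symm
  have hGood : ∀ v : MonoidAlgebra ℤ G,
      (∀ V ∈ B.parts, ∀ x ∈ V, ∀ y ∈ V, v.coeff x = v.coeff y) →
      (∀ V ∈ B.parts, ∀ x ∈ V, ∀ y ∈ τ V, v.coeff x = v.coeff y) →
      (∀ P ∈ Cparts, ∀ x ∈ P, ∀ y ∈ P, v.coeff x = v.coeff y) := by
    intro v hv1 hv2 P hP x hx y hy
    obtain ⟨Z, hZ, rfl⟩ := (hCparts_mem P).mp hP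
    obtain ⟨V, hV, hSCV, hxV⟩ := (hO_mem x Z).mp hx
    obtain ⟨V', hV', hSCV', hyV'⟩ := (hO_mem y Z).mp hy
    let u : Finset G → ℤ := fun W =>
      if h : W ∈ B.parts then v.coeff (B.nonempty_mem W h).choose else 0
    have hu_pt : ∀ W (hW : W ∈ B.parts), ∀ x ∈ W, v.coeff x = u W := by
      intro W hW x hxW
      show v.coeff x = if h : W ∈ B.parts then v.coeff (B.nonempty_mem W h).choose else 0
      rw [dif_pos hW]
      exact hv1 W hW x hxW _ (B.nonempty_mem W hW).choose_spec
    have hu_step : ∀ W, u (τ W) = u W := by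
      intro W
      by_cases hW : W ∈ B.parts
      · rw [← hu_pt _ (hτ_mem W hW) _ (B.nonempty_mem _ (hτ_mem W hW)).choose_spec,
            ← hu_pt _ hW _ (B.nonempty_mem _ hW).choose_spec]
        exact (hv2 W hW _ (B.nonempty_mem _ hW).choose_spec _
          (B.nonempty_mem _ (hτ_mem W hW)).choose_spec).symm
      · rw [hτ_id W hW]
    rw [hu_pt V hV x hxV, hu_pt V' hV' y hyV']
    exact hval u hu_step V V' (hSCV.symm.trans hSCV')
  -- decomposition of orbit-union indicators
  have hOind : ∀ Z₀ : Finset G,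
      grpInd (O Z₀) = ∑ Z ∈ B.parts.filter (fun W => τ.SameCycle Z₀ W), grpInd Z := by
    intro Z₀
    ext g
    rw [ma_sum_apply, grpInd_apply]
    obtain ⟨V, hV, hgV⟩ := B.cover g
    by_cases hSC : τ.SameCycle Z₀ V
    · rw [if_pos ((hO_mem g Z₀).mpr ⟨V, hV, hSC, hgV⟩)]
      rw [Finset.sum_eq_single V (fun W hW hne => ?_)
        (fun h => absurd (Finset.mem_filter.mpr ⟨hV, hSC⟩) h)]
      · rw [grpInd_apply, if_pos hgV]
      · rw [grpInd_apply, if_neg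
          (fun hgW => hne (B.part_eq (Finset.mem_filter.mp hW).1 hV hgW hgV))]
    · have hg : g ∉ O Z₀ := by
        intro hg
        obtain ⟨W, hW, hSCW, hgW⟩ := (hO_mem g Z₀).mp hg
        exact hSC (by rwa [B.part_eq hW hV hgW hgV] at hSCW)
      rw [if_neg hg]
      refine (Finset.sum_eq_zero fun W hW => ?_).symm
      rw [grpInd_apply, if_neg]
      intro hgW
      have := (Finset.mem_filter.mp hW).2
      rw [B.part_eq (Finset.mem_filter.mp hW).1 hV hgW hgV] at this
      exact hSC this
  -- the indicators of basic sets of A are good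
  have hXgood : ∀ X ∈ A.parts, ∀ P ∈ Cparts, ∀ x ∈ P, ∀ y ∈ P,
      (grpInd X).coeff x = (grpInd X).coeff y := by
    intro X hX
    apply hGood
    · exact B.carrier_const (hAB X hX)
    · intro V hV x hx y hy
      obtain ⟨z', hz'⟩ := B'.nonempty_mem _ (hm₁ V hV)
      have h1 := congrArg (fun v : MonoidAlgebra ℤ G' => v.coeff z') (hext₁ X hX)
      have h2 := congrArg (fun v : MonoidAlgebra ℤ G' => v.coeff z') (hext₂ X hX)
      rw [ma_sum_apply] at h1 h2
      have hsum1 : ∑ Z ∈ B.parts.filter (· ⊆ X), (grpInd (ψ₁ Z)).coeff z' =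
          if V ∈ B.parts.filter (· ⊆ X) then (1:ℤ) else 0 := by
        by_cases hVX : V ∈ B.parts.filter (· ⊆ X)
        · rw [if_pos hVX, Finset.sum_eq_single V (fun W hW hne => ?_)
            (fun h => absurd hVX h)]
          · rw [grpInd_apply, if_pos hz']
          · rw [grpInd_apply, if_neg]
            intro hz'W
            exact hne (hinj₁ W (Finset.mem_filter.mp hW).1 V hV
              (B'.part_eq (hm₁ W (Finset.mem_filter.mp hW).1) (hm₁ V hV) hz'W hz'))
        · rw [if_neg hVX]
          refine Finset.sum_eq_zero fun W hW => ?_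
          rw [grpInd_apply, if_neg]
          intro hz'W
          have hWV : W = V := hinj₁ W (Finset.mem_filter.mp hW).1 V hV
            (B'.part_eq (hm₁ W (Finset.mem_filter.mp hW).1) (hm₁ V hV) hz'W hz')
          rw [hWV] at hW
          exact hVX hW
      have hz'' : z' ∈ ψ₂ (τ V) := by rw [hτ_eq V hV]; exact hz'
      have hsum2 : ∑ Z ∈ B.parts.filter (· ⊆ X), (grpInd (ψ₂ Z)).coeff z' =
          if τ V ∈ B.parts.filter (· ⊆ X) then (1:ℤ) else 0 := by
        by_cases hVX : τ V ∈ B.parts.filter (· ⊆ X)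
        · rw [if_pos hVX, Finset.sum_eq_single (τ V) (fun W hW hne => ?_)
            (fun h => absurd hVX h)]
          · rw [grpInd_apply, if_pos hz'']
          · rw [grpInd_apply, if_neg]
            intro hz'W
            exact hne (hinj₂ W (Finset.mem_filter.mp hW).1 (τ V) (hτ_mem V hV)
              (B'.part_eq (hm₂ W (Finset.mem_filter.mp hW).1) (hm₂ _ (hτ_mem V hV)) hz'W hz''))
        · rw [if_neg hVX]
          refine Finset.sum_eq_zero fun W hW => ?_
          rw [grpInd_apply, if_neg]
          intro hz'W
          have hWV : W = τ V := hinj₂ W (Finset.mem_filter.mp hW).1 (τ V) (hτ_mem V hV)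
            (B'.part_eq (hm₂ W (Finset.mem_filter.mp hW).1) (hm₂ _ (hτ_mem V hV)) hz'W hz'')
          rw [hWV] at hW
          exact hVX hW
      have heq : (if V ∈ B.parts.filter (· ⊆ X) then (1:ℤ) else 0) =
          (if τ V ∈ B.parts.filter (· ⊆ X) then (1:ℤ) else 0) := by
        rw [← hsum1, ← hsum2, ← h1, ← h2]
      have hVmem : V ∈ B.parts.filter (· ⊆ X) ↔ V ⊆ X := by
        simp [Finset.mem_filter, hV]
      have hτVmem : τ V ∈ B.parts.filter (· ⊆ X) ↔ τ V ⊆ X := by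
        simp [Finset.mem_filter, hτ_mem V hV]
      have hxX : x ∈ X ↔ V ⊆ X := by
        constructor
        · intro hxX w hw
          have hc := B.carrier_const (hAB X hX) V hV x hx w hw
          rw [grpInd_apply, grpInd_apply, if_pos hxX] at hc
          by_contra hwX
          rw [if_neg hwX] at hc
          exact one_ne_zero hc
        · exact fun h => h hx
      have hyX : y ∈ X ↔ τ V ⊆ X := by
        constructor
        · intro hyX w hw
          have hc := B.carrier_const (hAB X hX) (τ V) (hτ_mem V hV) y hy w hw
          rw [grpInd_apply, grpInd_apply, if_pos hyX] at hc
          by_contra hwX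
          rw [if_neg hwX] at hc
          exact one_ne_zero hc
        · exact fun h => h hy
      rw [grpInd_apply, grpInd_apply]
      by_cases hVX : V ⊆ X
      · rw [if_pos (hxX.mpr hVX)]
        have hτVX : τ V ⊆ X := by
          by_contra hc
          rw [if_pos (hVmem.mpr hVX), if_neg (fun m => hc (hτVmem.mp m))] at heq
          exact one_ne_zero heq
        rw [if_pos (hyX.mpr hτVX)]
      · have hτVX : ¬ τ V ⊆ X := by
          intro hc
          rw [if_neg (fun m => hVX (hVmem.mp m)), if_pos (hτVmem.mpr hc)] at heq
          exact one_ne_zero heq.symm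
        rw [if_neg (fun h => hVX (hxX.mp h)), if_neg (fun h => hτVX (hyX.mp h))]
  -- ξ is good
  have hξgood : ∀ P ∈ Cparts, ∀ x ∈ P, ∀ y ∈ P, ξ.coeff x = ξ.coeff y := by
    apply hGood
    · exact B.carrier_const hξB
    · intro V hV x hx y hy
      obtain ⟨z', hz'⟩ := B'.nonempty_mem _ (hm₁ V hV)
      have h1 := hξ₁ V hV x hx z' hz'
      have h2 := hξ₂ (τ V) (hτ_mem V hV) y hy z' (by rw [hτ_eq V hV]; exact hz')
      rw [h1, h2]
  -- reindexing sums along τ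
  have reidx : ∀ (F : Finset (Finset G)), (∀ Z ∈ F, τ Z ∈ F) → (∀ Z ∈ F, τ.symm Z ∈ F) →
      ∀ h : Finset G → ℤ, ∑ Z ∈ F, h (τ Z) = ∑ Z ∈ F, h Z := by
    intro F hmem hmem' h
    refine Finset.sum_nbij' (fun Z => τ Z) (fun Z => τ.symm Z) hmem hmem'
      (fun a _ => τ.symm_apply_apply a) (fun a _ => τ.apply_symm_apply a) (fun a _ => rfl)
  have hFτ : ∀ (Z₀ : Finset G), ∀ Z ∈ B.parts.filter (fun W => τ.SameCycle Z₀ W),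
      τ Z ∈ B.parts.filter (fun W => τ.SameCycle Z₀ W) := by
    intro Z₀ Z hZ
    obtain ⟨hZp, hSC⟩ := Finset.mem_filter.mp hZ
    exact Finset.mem_filter.mpr ⟨hτ_mem Z hZp, hSC.trans (hSC_next Z)⟩
  have hFτ' : ∀ (Z₀ : Finset G), ∀ Z ∈ B.parts.filter (fun W => τ.SameCycle Z₀ W),
      τ.symm Z ∈ B.parts.filter (fun W => τ.SameCycle Z₀ W) := by
    intro Z₀ Z hZ
    obtain ⟨hZp, hSC⟩ := Finset.mem_filter.mp hZ
    exact Finset.mem_filter.mpr ⟨hτ_symm_mem Z hZp, hSC.trans (hSC_prev Z)⟩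
  -- products of orbit-union indicators are good
  have hCmul : ∀ P ∈ Cparts, ∀ Q ∈ Cparts, ∃ c : Finset G → ℤ,
      grpInd P * grpInd Q = ∑ R ∈ Cparts, c R • grpInd R := by
    intro P hP Q hQ
    obtain ⟨Z₀, hZ₀, rfl⟩ := (hCparts_mem P).mp hP
    obtain ⟨W₀, hW₀, rfl⟩ := (hCparts_mem Q).mp hQ
    refine repr_of_const Cparts hCcov hCdis _ ?_
    apply hGood
    · intro V hV x hx y hy
      obtain ⟨z', hz'⟩ := B'.nonempty_mem _ (hm₁ V hV)
      rw [hOind Z₀, hOind W₀, Finset.sum_mul_sum]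
      simp only [ma_sum_apply]
      refine Finset.sum_congr rfl fun Z hZ => Finset.sum_congr rfl fun W hW => ?_
      rw [hsc₁ Z (Finset.mem_filter.mp hZ).1 W (Finset.mem_filter.mp hW).1 V hV x hx z' hz',
        hsc₁ Z (Finset.mem_filter.mp hZ).1 W (Finset.mem_filter.mp hW).1 V hV y hy z' hz']
    · intro V hV x hx y hy
      obtain ⟨z', hz'⟩ := B'.nonempty_mem _ (hm₁ V hV)
      have hz'' : z' ∈ ψ₂ (τ V) := by rw [hτ_eq V hV]; exact hz'
      rw [hOind Z₀, hOind W₀, Finset.sum_mul_sum]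
      simp only [ma_sum_apply]
      calc ∑ Z ∈ B.parts.filter (fun W => τ.SameCycle Z₀ W),
            ∑ W ∈ B.parts.filter (fun W => τ.SameCycle W₀ W), (grpInd Z * grpInd W).coeff x
          = ∑ Z ∈ B.parts.filter (fun W => τ.SameCycle Z₀ W),
            ∑ W ∈ B.parts.filter (fun W => τ.SameCycle W₀ W),
              (grpInd (ψ₁ Z) * grpInd (ψ₁ W)).coeff z' :=
            Finset.sum_congr rfl fun Z hZ => Finset.sum_congr rfl fun W hW =>
              hsc₁ Z (Finset.mem_filter.mp hZ).1 W (Finset.mem_filter.mp hW).1 V hV x hx z' hz'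
        _ = ∑ Z ∈ B.parts.filter (fun W => τ.SameCycle Z₀ W),
            ∑ W ∈ B.parts.filter (fun W => τ.SameCycle W₀ W),
              (grpInd (ψ₂ (τ Z)) * grpInd (ψ₂ (τ W))).coeff z' := by
            refine Finset.sum_congr rfl fun Z hZ => Finset.sum_congr rfl fun W hW => ?_
            rw [hτ_eq Z (Finset.mem_filter.mp hZ).1, hτ_eq W (Finset.mem_filter.mp hW).1]
        _ = ∑ Z ∈ B.parts.filter (fun W => τ.SameCycle Z₀ W),
            ∑ W ∈ B.parts.filter (fun W => τ.SameCycle W₀ W),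
              (grpInd (ψ₂ Z) * grpInd (ψ₂ (τ W))).coeff z' :=
            reidx _ (hFτ Z₀) (hFτ' Z₀)
              (fun Z => ∑ W ∈ B.parts.filter (fun W => τ.SameCycle W₀ W),
                (grpInd (ψ₂ Z) * grpInd (ψ₂ (τ W))).coeff z')
        _ = ∑ Z ∈ B.parts.filter (fun W => τ.SameCycle Z₀ W),
            ∑ W ∈ B.parts.filter (fun W => τ.SameCycle W₀ W),
              (grpInd (ψ₂ Z) * grpInd (ψ₂ W)).coeff z' :=
            Finset.sum_congr rfl fun Z hZ =>
              reidx _ (hFτ W₀) (hFτ' W₀)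
                (fun W => (grpInd (ψ₂ Z) * grpInd (ψ₂ W)).coeff z')
        _ = ∑ Z ∈ B.parts.filter (fun W => τ.SameCycle Z₀ W),
            ∑ W ∈ B.parts.filter (fun W => τ.SameCycle W₀ W), (grpInd Z * grpInd W).coeff y :=
            (Finset.sum_congr rfl fun Z hZ => Finset.sum_congr rfl fun W hW =>
              hsc₂ Z (Finset.mem_filter.mp hZ).1 W (Finset.mem_filter.mp hW).1 (τ V)
                (hτ_mem V hV) y hy z' hz'').symm
  -- assemble the Schur ring C
  let C : SchurRing G := ⟨Cparts, hCne, hCcov, hCdis, hCone, hCinv, hCmul⟩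
  have hmemC : ∀ v : MonoidAlgebra ℤ G,
      (∀ P ∈ Cparts, ∀ x ∈ P, ∀ y ∈ P, v.coeff x = v.coeff y) → v ∈ C.carrier := by
    intro v hv
    obtain ⟨c, hc⟩ := repr_of_const Cparts hCcov hCdis v hv
    rw [hc]
    exact sum_grpInd_mem_carrier C c
  have hAC : A.le C := fun X hX => hmemC _ (hXgood X hX)
  have hξC : ξ ∈ C.carrier := hmemC _ hξgood
  have hBC := hBmin C hAC hξC
  -- conclude
  intro Z hZ
  have hconst := C.carrier_const (hBC Z hZ)
  have hOZ : O Z ∈ Cparts := (hCparts_mem _).mpr ⟨Z, hZ, rfl⟩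
  obtain ⟨x, hx⟩ := B.nonempty_mem Z hZ
  obtain ⟨y, hy⟩ := B.nonempty_mem (τ Z) (hτ_mem Z hZ)
  have hxO : x ∈ O Z := hsub_O Z hZ hx
  have hyO : y ∈ O Z := (hO_mem y Z).mpr ⟨τ Z, hτ_mem Z hZ, hSC_next Z, hy⟩
  have hc := hconst (O Z) hOZ x hxO y hyO
  rw [grpInd_apply, grpInd_apply, if_pos hx] at hc
  have hyZ : y ∈ Z := by
    by_contra h
    rw [if_neg h] at hc
    exact one_ne_zero hc
  have hτZ : τ Z = Z := B.part_eq (hτ_mem Z hZ) hZ hy hyZ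
  rw [← hτ_eq Z hZ, hτZ]
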